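/- Let (t_i) be a non-decreasing sequence of positive integers tending to +∞, and (f_i) a sequence of non-negative reals such that ∑ f_i/t_i converges. Then there exists a sequence (a_i) of positive integers and a rank N such that, setting P_i = ∏_{j=1}^i a_j, we have t_i/2 ≤ P_i ≤ t_i for all i ≥ N, and ∑_{i=1}^n f_i/P_i < 1 for all n. -/

import Mathlib

/-- Auxiliary: the partial products `P_i` for the spherically symmetric tree. -/
def Qf (t : ℕ → ℕ) (N : ℕ) : ℕ → ℕ
  | 0 => 1
  | i + 1 => if i + 1 ≤ N then t N else Qf t N i * (t (i + 1) / Qf t N i)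

lemma Qf_of_le (t : ℕ → ℕ) {N i : ℕ} (h1 : 1 ≤ i) (h2 : i ≤ N) : Qf t N i = t N := by
  cases i with
  | zero => omega
  | succ j => simp [Qf, h2]

lemma Qf_main {t : ℕ → ℕ} (hmono : Monotone t) (hpos : ∀ i, 1 ≤ t i) {N : ℕ} (hN : 1 ≤ N) :
    ∀ i, N ≤ i → Qf t N i ≤ t i ∧ t i ≤ 2 * Qf t N i := by
  intro i hi
  induction i, hi using Nat.le_induction with
  | base =>
    rw [Qf_of_le t hN le_rfl]
    omega
  | succ i hi ih =>
    obtain ⟨h1, h2⟩ := ih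
    have hQpos : 1 ≤ Qf t N i := by have := hpos i; omega
    have hle : Qf t N i ≤ t (i + 1) := h1.trans (hmono (Nat.le_succ i))
    have hq1 : 1 ≤ t (i + 1) / Qf t N i := (Nat.one_le_div_iff hQpos).mpr hle
    have hub : t (i + 1) / Qf t N i * Qf t N i ≤ t (i + 1) := Nat.div_mul_le_self _ _
    have hlb : t (i + 1) < Qf t N i * (t (i + 1) / Qf t N i + 1) :=
      Nat.lt_mul_div_succ _ hQpos
    have hQ : Qf t N (i + 1) = Qf t N i * (t (i + 1) / Qf t N i) := by
      have hn : ¬ (i + 1 ≤ N) := by omega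
      simp [Qf, hn]
    constructor
    · rw [hQ, mul_comm]; exact hub
    · rw [hQ]
      have h3 : Qf t N i * (t (i + 1) / Qf t N i + 1) ≤
          Qf t N i * (2 * (t (i + 1) / Qf t N i)) := Nat.mul_le_mul_left _ (by omega)
      calc t (i + 1) ≤ Qf t N i * (2 * (t (i + 1) / Qf t N i)) := le_trans hlb.le h3
        _ = 2 * (Qf t N i * (t (i + 1) / Qf t N i)) := by ring

lemma Qf_pos {t : ℕ → ℕ} (hmono : Monotone t) (hpos : ∀ i, 1 ≤ t i) {N : ℕ} (hN : 1 ≤ N) :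
    ∀ i, 1 ≤ Qf t N i := by
  intro i
  rcases Nat.eq_zero_or_pos i with h | h
  · subst h; simp [Qf]
  rcases le_or_gt i N with h2 | h2
  · rw [Qf_of_le t h h2]; exact hpos N
  · have := (Qf_main hmono hpos hN i h2.le).2
    have := hpos i
    omega

lemma Qf_lower {t : ℕ → ℕ} (hmono : Monotone t) (hpos : ∀ i, 1 ≤ t i) {N : ℕ} (hN : 1 ≤ N) :
    ∀ i, 1 ≤ i → t i ≤ 2 * Qf t N i := by
  intro i h1
  rcases le_or_gt i N with h2 | h2
  · rw [Qf_of_le t h1 h2]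
    have := hmono h2
    omega
  · exact (Qf_main hmono hpos hN i h2.le).2

lemma Qf_mul {t : ℕ → ℕ} (hmono : Monotone t) (hpos : ∀ i, 1 ≤ t i) {N : ℕ} (hN : 1 ≤ N) :
    ∀ i, Qf t N i * (Qf t N (i + 1) / Qf t N i) = Qf t N (i + 1) := by
  intro i
  rcases le_or_gt (i + 1) N with h | h
  · rw [Qf_of_le t (by omega) h]
    rcases Nat.eq_zero_or_pos i with h0 | h0
    · subst h0; simp [Qf]
    · rw [Qf_of_le t h0 (by omega)]
      rw [Nat.div_self (hpos N), mul_one]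
  · have hn : ¬ (i + 1 ≤ N) := by omega
    have hQ : Qf t N (i + 1) = Qf t N i * (t (i + 1) / Qf t N i) := by simp [Qf, hn]
    rw [hQ, Nat.mul_div_cancel_left _ (Qf_pos hmono hpos hN i)]

theorem stmt_11 (t : ℕ → ℕ) (f : ℕ → ℝ)
    (hmono : Monotone t) (hpos : ∀ i, 1 ≤ t i)
    (htop : Filter.Tendsto t Filter.atTop Filter.atTop)
    (hf : ∀ i, 0 ≤ f i)
    (hsum : Summable (fun i => f i / t i)) :
    ∃ a : ℕ → ℕ, (∀ i, 1 ≤ a i) ∧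
      ∃ N : ℕ, (∀ i, N ≤ i →
          (t i : ℝ) / 2 ≤ ∏ j ∈ Finset.Icc 1 i, (a j : ℝ) ∧
          (∏ j ∈ Finset.Icc 1 i, (a j : ℝ)) ≤ t i) ∧
        ∀ n : ℕ, ∑ i ∈ Finset.Icc 1 n, f i / ∏ j ∈ Finset.Icc 1 i, (a j : ℝ) < 1 := by
  -- Step 1: choose M such that all tail partial sums past M are < 1/4.
  set S : ℕ → ℝ := fun n => ∑ i ∈ Finset.range n, f i / t i with hS
  have hcauchy : CauchySeq S := (hsum.hasSum.tendsto_sum_nat).cauchySeq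
  obtain ⟨M, hM⟩ := Metric.cauchySeq_iff.mp hcauchy (1/4) (by norm_num)
  have htail : ∀ n : ℕ, ∑ i ∈ Finset.Ioc M n, f i / t i < 1/4 := by
    intro n
    rcases le_or_gt n M with h | h
    · rw [Finset.Ioc_eq_empty (by omega)]
      norm_num
    · have heq : ∑ i ∈ Finset.Ioc M n, f i / t i = S (n + 1) - S (M + 1) := by
        rw [← Finset.Ico_add_one_add_one_eq_Ioc, Finset.sum_Ico_eq_sub _ (by omega)]
      rw [heq]
      have := hM (n + 1) (by omega) (M + 1) (by omega)
      rw [Real.dist_eq] at this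
      calc S (n + 1) - S (M + 1) ≤ |S (n + 1) - S (M + 1)| := le_abs_self _
        _ < 1/4 := this
  -- Step 2: choose N > M with t N > 4 * C where C = ∑_{i ≤ M} f i.
  set C : ℝ := ∑ i ∈ Finset.Icc 1 M, f i with hC
  have hC0 : 0 ≤ C := Finset.sum_nonneg fun i _ => hf i
  obtain ⟨K, hK⟩ := exists_nat_gt (4 * C)
  obtain ⟨N₁, hN₁⟩ := Filter.eventually_atTop.mp (htop.eventually_ge_atTop K)
  set N : ℕ := max N₁ (M + 1) with hNdef
  have hN1 : 1 ≤ N := by omega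
  have hMN : M < N := by omega
  have htN : 4 * C < (t N : ℝ) := by
    have h1 : K ≤ t N := hN₁ N (le_max_left _ _)
    have : (K : ℝ) ≤ t N := by exact_mod_cast h1
    linarith
  have htNpos : (0:ℝ) < t N := by exact_mod_cast hpos N
  -- Step 3: the sequence a
  set a : ℕ → ℕ := fun j => Qf t N j / Qf t N (j - 1) with ha
  have hmul := Qf_mul hmono hpos hN1
  have hQpos := Qf_pos hmono hpos hN1
  have hapos : ∀ j, 1 ≤ a j := by
    intro j
    cases j with
    | zero => simp [ha, Qf]
    | succ i =>
      have h := hmul i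
      by_contra hcon
      have : a (i + 1) = 0 := by omega
      simp only [ha, Nat.add_sub_cancel] at this
      rw [this, mul_zero] at h
      have := hQpos (i + 1)
      omega
  have hprod : ∀ n : ℕ, ∏ j ∈ Finset.Icc 1 n, a j = Qf t N n := by
    intro n
    induction n with
    | zero => simp [Qf]
    | succ n ih =>
      rw [Finset.prod_Icc_succ_top (by omega), ih]
      have : a (n + 1) = Qf t N (n + 1) / Qf t N n := by simp [ha]
      rw [this, hmul n]
  have hprodR : ∀ n : ℕ, ∏ j ∈ Finset.Icc 1 n, (a j : ℝ) = (Qf t N n : ℝ) := by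
    intro n
    rw [← Nat.cast_prod, hprod n]
  have hQposR : ∀ i, (0:ℝ) < Qf t N i := by
    intro i; exact_mod_cast hQpos i
  refine ⟨a, hapos, N, ?_, ?_⟩
  · intro i hi
    obtain ⟨h1, h2⟩ := Qf_main hmono hpos hN1 i hi
    rw [hprodR i]
    constructor
    · have : (t i : ℝ) ≤ 2 * Qf t N i := by exact_mod_cast h2
      linarith
    · exact_mod_cast h1
  · intro n
    -- per-term bounds
    have hterm1 : ∀ i ∈ Finset.Icc 1 M, f i / ∏ j ∈ Finset.Icc 1 i, (a j : ℝ) = f i / t N := by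
      intro i hi
      rw [Finset.mem_Icc] at hi
      rw [hprodR i, Qf_of_le t hi.1 (by omega)]
    have hterm2 : ∀ i, 1 ≤ i → f i / ∏ j ∈ Finset.Icc 1 i, (a j : ℝ) ≤ 2 * (f i / t i) := by
      intro i h1
      rw [hprodR i]
      have htle : (t i : ℝ) ≤ 2 * Qf t N i := by
        exact_mod_cast Qf_lower hmono hpos hN1 i h1
      have htipos : (0:ℝ) < t i := by exact_mod_cast hpos i
      rw [mul_div_assoc'] at *
      rw [div_le_div_iff₀ (hQposR i) htipos]
      nlinarith [hf i, hQposR i]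
    have hfirst : ∀ m : ℕ, m ≤ M → ∑ i ∈ Finset.Icc 1 m, f i / ∏ j ∈ Finset.Icc 1 i, (a j : ℝ) < 1/4 := by
      intro m hm
      have hsub : Finset.Icc 1 m ⊆ Finset.Icc 1 M := Finset.Icc_subset_Icc_right hm
      calc ∑ i ∈ Finset.Icc 1 m, f i / ∏ j ∈ Finset.Icc 1 i, (a j : ℝ)
          = ∑ i ∈ Finset.Icc 1 m, f i / t N := by
            refine Finset.sum_congr rfl fun i hi => hterm1 i (hsub hi)
        _ = (∑ i ∈ Finset.Icc 1 m, f i) / t N := by rw [Finset.sum_div]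
        _ ≤ C / t N := by
            gcongr
            exact Finset.sum_le_sum_of_subset_of_nonneg hsub fun i _ _ => hf i
        _ < 1/4 := by rw [div_lt_iff₀ htNpos]; linarith
    rcases le_or_gt n M with hn | hn
    · exact lt_trans (hfirst n hn) (by norm_num)
    · have hsplit : Finset.Icc 1 n = Finset.Icc 1 M ∪ Finset.Ioc M n := by
        ext i
        simp only [Finset.mem_Icc, Finset.mem_Ioc, Finset.mem_union]
        omega
      have hdisj : Disjoint (Finset.Icc 1 M) (Finset.Ioc M n) := by
        rw [Finset.disjoint_left]
        intro i hi hi'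
        rw [Finset.mem_Icc] at hi
        rw [Finset.mem_Ioc] at hi'
        omega
      rw [hsplit, Finset.sum_union hdisj]
      have hpart2 : ∑ i ∈ Finset.Ioc M n, f i / ∏ j ∈ Finset.Icc 1 i, (a j : ℝ) ≤
          2 * ∑ i ∈ Finset.Ioc M n, f i / t i := by
        rw [Finset.mul_sum]
        refine Finset.sum_le_sum fun i hi => ?_
        rw [Finset.mem_Ioc] at hi
        exact hterm2 i (by omega)
      have h1 := hfirst M le_rfl
      have h2 := htail n
      linarith
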